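/- arXiv:2401.14059 — 3 statements merged into one kernel-verified Lean document; each statement's English description precedes it below -/
import Mathlib

section
/- Let A and C be categories with C locally small, let B be a small category with all small limits, and let α : A ⥤ C and β : B ⥤ C be functors such that β preserves small limits. Fix objects a in A and b in B and a morphism F : α.obj a ⟶ β.obj b in C. Then for every morphism f : a' ⟶ a in A there exists a universal completion of (f, F); that is, there exist an object b' of B, a morphism g : b' ⟶ b in B and a morphism τ : α.obj a' ⟶ β.obj b' in C with τ ≫ β.map g = α.map f ≫ F, such that for every triple (b'', g'' : b'' ⟶ b, τ' : α.obj a' ⟶ β.obj b'') with τ' ≫ β.map g'' = α.map f ≫ F there is a unique morphism φ : b' ⟶ b'' in B with τ ≫ β.map φ = τ' and φ ≫ g'' = g. -/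
open CategoryTheory CategoryTheory.Limits

universe u v₁ u₁ u₂

/-- A completion `(b', g, τ)` of the L-shaped diagram `(f, F)` is universal if every other
completion factors through it by a unique morphism of `B`. -/
def IsUniversalCompletion {A : Type u₁} [Category.{v₁} A] {B : Type u} [SmallCategory B]
    {C : Type u₂} [Category.{u} C] (α : A ⥤ C) (β : B ⥤ C)
    {a a' : A} {b : B} (f : a' ⟶ a) (F : α.obj a ⟶ β.obj b)
    (b' : B) (g : b' ⟶ b) (τ : α.obj a' ⟶ β.obj b') : Prop :=
  τ ≫ β.map g = α.map f ≫ F ∧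
    ∀ (b'' : B) (g'' : b'' ⟶ b) (τ' : α.obj a' ⟶ β.obj b''),
      τ' ≫ β.map g'' = α.map f ≫ F →
        ∃! φ : b' ⟶ b'', τ ≫ β.map φ = τ' ∧ φ ≫ g'' = g

/-- If the identity functor has a limit, its limit point is weakly-initial with unique maps. -/
lemma exists_unique_hom_of_hasLimit_id {D : Type*} [Category D] [HasLimit (𝟭 D)] (Y : D) :
    ∃! h : limit (𝟭 D) ⟶ Y, True := by
  have key : ∀ (Z : D) (h : limit (𝟭 D) ⟶ Z), limit.π (𝟭 D) (limit (𝟭 D)) ≫ h =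
      limit.π (𝟭 D) Z := by
    intro Z h
    simpa using (limit.w (𝟭 D) h)
  have self_id : limit.π (𝟭 D) (limit (𝟭 D)) = 𝟙 _ := by
    apply limit.hom_ext
    intro j
    simpa using key j (limit.π (𝟭 D) j)
  refine ⟨limit.π (𝟭 D) Y, trivial, fun h _ => ?_⟩
  have := key Y h
  rwa [self_id, Category.id_comp] at this

theorem exists_universal_completion
    {A : Type u₁} [Category.{v₁} A] {B : Type u} [SmallCategory B] [HasLimits B]
    {C : Type u₂} [Category.{u} C] (α : A ⥤ C) (β : B ⥤ C) [PreservesLimits β]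
    (a : A) (b : B) (F : α.obj a ⟶ β.obj b) {a' : A} (f : a' ⟶ a) :
    ∃ (b' : B) (g : b' ⟶ b) (τ : α.obj a' ⟶ β.obj b'),
      IsUniversalCompletion α β f F b' g τ := by
  -- The category of completions, as the over category of `(b, α.map f ≫ F)` in the
  -- structured arrow category.
  let S := StructuredArrow (α.obj a') β
  let X : S := StructuredArrow.mk (α.map f ≫ F)
  haveI : HasLimitsOfSize.{u, u} S := inferInstance
  haveI : HasLimitsOfSize.{u, u} (Over X) := inferInstance
  haveI : HasLimit (𝟭 (Over X)) := inferInstance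
  set I : Over X := limit (𝟭 (Over X)) with hI
  refine ⟨I.left.right, I.hom.right, I.left.hom, ?_, ?_⟩
  · exact StructuredArrow.w I.hom
  · intro b'' g'' τ' hcomm
    -- Package the competing completion as an object of `Over X`.
    let Y : Over X := Over.mk (Y := StructuredArrow.mk τ')
      (StructuredArrow.homMk g'' (by simpa [X] using hcomm))
    obtain ⟨h, -, huniq⟩ := exists_unique_hom_of_hasLimit_id (D := Over X) Y
    refine ⟨h.left.right, ⟨?_, ?_⟩, ?_⟩
    · exact StructuredArrow.w h.left
    · have := Over.w h
      exact congrArg CommaMorphism.right this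
    · intro φ ⟨h₁, h₂⟩
      have : (Over.homMk (StructuredArrow.homMk φ h₁)
          (by ext; exact h₂) : I ⟶ Y) = h := huniq _ trivial
      exact congrArg (fun m => CommaMorphism.right (CommaMorphism.left m)) this
end

section
/- Let A and C be categories with C locally small, let B be a small category with all small limits, and let α : A ⥤ C and β : B ⥤ C be functors such that β preserves small limits. Fix objects a in A and b in B and a morphism F : α.obj a ⟶ β.obj b in C. Then there exists a functor τ̄_F : Over a ⥤ Comma (Comma.snd α β) (Functor.fromPUnit b) such that for every object f of Over a: (i) the first component of the Comma-(α,β) part of τ̄_F.obj f is the object f.left of A (so that composing τ̄_F with the projection to Comma α β and then with Comma.fst : Comma α β ⥤ A recovers Over.forget a); and (ii) writing the value τ̄_F.obj f as a comma object (f.left, b'_f, τ_f : α.obj f.left ⟶ β.obj b'_f) of Comma α β together with a morphism g_f : b'_f ⟶ b in B, the triple (b'_f, g_f, τ_f) is a universal completion of (f.hom, F). -/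
open CategoryTheory CategoryTheory.Limits

universe u v₁ u₁ u₂

section Aux


variable {A : Type u₁} [Category.{v₁} A] {B : Type u} [SmallCategory B]
    {C : Type u₂} [Category.{u} C] (α : A ⥤ C) (β : B ⥤ C)
    {a a' : A} (b : B) (F : α.obj a ⟶ β.obj b) (f : a' ⟶ a)

/-- The category of completions of the L-shaped diagram `(f, F)`. -/
structure LCompl where
  pt : B
  g : pt ⟶ b
  τ : α.obj a' ⟶ β.obj pt
  w : τ ≫ β.map g = α.map f ≫ F

namespace LCompl

variable {α β b F f}

@[ext]
structure Hom (e₁ e₂ : LCompl α β b F f) where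
  φ : e₁.pt ⟶ e₂.pt
  h₁ : e₁.τ ≫ β.map φ = e₂.τ
  h₂ : φ ≫ e₂.g = e₁.g

instance : Category (LCompl α β b F f) where
  Hom := Hom
  id e := ⟨𝟙 _, by simp, by simp⟩
  comp u v := ⟨u.φ ≫ v.φ, by rw [Functor.map_comp, ← Category.assoc, u.h₁, v.h₁],
    by rw [Category.assoc, v.h₂, u.h₂]⟩

@[simp] lemma id_φ (e : LCompl α β b F f) : Hom.φ (𝟙 e) = 𝟙 e.pt := rfl

@[simp] lemma comp_φ {e₁ e₂ e₃ : LCompl α β b F f} (u : e₁ ⟶ e₂) (v : e₂ ⟶ e₃) :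
    Hom.φ (u ≫ v) = u.φ ≫ v.φ := rfl

variable (α β b F f) in
/-- The forgetful functor to `B`. -/
@[simps]
def U : LCompl α β b F f ⥤ B where
  obj e := e.pt
  map u := u.φ

end LCompl

variable [HasLimits B] [PreservesLimits β]

lemma exists_universalCompletion :
    ∃ (b' : B) (g : b' ⟶ b) (τ : α.obj a' ⟶ β.obj b'),
      IsUniversalCompletion α β f F b' g τ := by
  classical
  set U := LCompl.U α β b F f with hU
  let e₀ : LCompl α β b F f := ⟨b, 𝟙 b, α.map f ≫ F, by simp⟩
  let L : B := limit U
  let g : L ⟶ b := limit.π U e₀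
  -- the cone over U ⋙ β with apex α.obj a'
  let c : Cone (U ⋙ β) :=
    { pt := α.obj a'
      π := { app := fun e => e.τ
             naturality := fun e₁ e₂ u => (Category.id_comp _).trans u.h₁.symm } }
  let hβ : IsLimit (β.mapCone (limit.cone U)) := isLimitOfPreserves β (limit.isLimit U)
  let τ : α.obj a' ⟶ β.obj L := hβ.lift c
  have fac : ∀ e : LCompl α β b F f, τ ≫ β.map (limit.π U e) = e.τ := fun e => hβ.fac c e
  have hπg : ∀ e : LCompl α β b F f, limit.π U e ≫ e.g = g := by
    intro e
    exact limit.w U (⟨e.g, by simp [e.w, e₀], by simp [e₀]⟩ : e ⟶ e₀)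
  have hw : τ ≫ β.map g = α.map f ≫ F := by
    have := fac e₀
    exact this
  let ℓ : LCompl α β b F f := ⟨L, g, τ, hw⟩
  have hπℓ : limit.π U ℓ = 𝟙 L := by
    apply limit.hom_ext
    intro e
    have h2 : limit.π U ℓ ≫ limit.π U e = limit.π U e :=
      limit.w U (⟨limit.π U e, fac e, hπg e⟩ : ℓ ⟶ e)
    exact h2.trans (Category.id_comp _).symm
  refine ⟨L, g, τ, hw, ?_⟩
  intro b'' g'' τ' h
  refine ⟨limit.π U ⟨b'', g'', τ', h⟩, ⟨fac _, hπg _⟩, ?_⟩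
  intro φ hφ
  have h3 : limit.π U ℓ ≫ φ = limit.π U ⟨b'', g'', τ', h⟩ :=
    limit.w U (⟨φ, hφ.1, hφ.2⟩ : ℓ ⟶ ⟨b'', g'', τ', h⟩)
  rw [hπℓ] at h3
  exact (Category.id_comp φ).symm.trans h3

end Aux

theorem exists_lifted_induced_functor
    {A : Type u₁} [Category.{v₁} A] {B : Type u} [SmallCategory B] [HasLimits B]
    {C : Type u₂} [Category.{u} C] (α : A ⥤ C) (β : B ⥤ C) [PreservesLimits β]
    (a : A) (b : B) (F : α.obj a ⟶ β.obj b) :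
    ∃ T : Over a ⥤ Comma (Comma.snd α β) (Functor.fromPUnit b),
      ∃ h : ∀ f : Over a, (T.obj f).left.left = f.left,
        (T ⋙ Comma.fst (Comma.snd α β) (Functor.fromPUnit b) ⋙ Comma.fst α β
            = Over.forget a) ∧
        ∀ f : Over a,
          IsUniversalCompletion α β f.hom F
            (T.obj f).left.right (T.obj f).hom
            (eqToHom (congrArg α.obj (h f).symm) ≫ (T.obj f).left.hom) := by
  classical
  choose b' g τ hU using fun f : Over a => exists_universalCompletion α β b F f.hom
  have hcomp : ∀ {f₁ f₂ : Over a} (k : f₁ ⟶ f₂),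
      (α.map k.left ≫ τ f₂) ≫ β.map (g f₂) = α.map f₁.hom ≫ F := by
    intro f₁ f₂ k
    rw [Category.assoc, (hU f₂).1, ← Category.assoc, ← α.map_comp, Over.w k]
  choose φ φspec φuniq using fun {f₁ f₂ : Over a} (k : f₁ ⟶ f₂) =>
    (hU f₁).2 (b' f₂) (g f₂) (α.map k.left ≫ τ f₂) (hcomp k)
  have huniq : ∀ {f₁ f₂ : Over a} (k : f₁ ⟶ f₂) (ψ : b' f₁ ⟶ b' f₂),
      τ f₁ ≫ β.map ψ = α.map k.left ≫ τ f₂ → ψ ≫ g f₂ = g f₁ → ψ = φ k :=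
    fun k ψ h1 h2 => φuniq k ψ ⟨h1, h2⟩
  refine ⟨{
    obj := fun f =>
      { left := { left := f.left, right := b' f, hom := τ f }
        right := ⟨PUnit.unit⟩
        hom := g f }
    map := fun {f₁ f₂} k =>
      { left := { left := k.left, right := φ k, w := ((φspec k).1).symm }
        right := 𝟙 _
        w := by
          dsimp
          rw [Category.comp_id]
          exact (φspec k).2 }
    map_id := fun f => by
      have h0 : 𝟙 (b' f) = φ (𝟙 f) :=
        huniq (𝟙 f) (𝟙 (b' f)) (by simp) (by simp)
      apply CommaMorphism.ext
      · apply CommaMorphism.ext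
        · rfl
        · exact h0.symm
      · rfl
    map_comp := fun {f₁ f₂ f₃} k l => by
      have h0 : φ k ≫ φ l = φ (k ≫ l) := by
        refine huniq (k ≫ l) (φ k ≫ φ l) ?_ ?_
        · rw [Functor.map_comp, ← Category.assoc, (φspec k).1, Category.assoc,
            (φspec l).1, Over.comp_left, Functor.map_comp, Category.assoc]
        · rw [Category.assoc, (φspec l).2, (φspec k).2]
      apply CommaMorphism.ext
      · apply CommaMorphism.ext
        · rfl
        · exact h0.symm
      · rfl }, fun _ => rfl, rfl, ?_⟩
  intro f
  simpa using hU f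
end

section
/- Let X be a small category which is a preorder (between any two objects there is at most one morphism) and which has all small limits, and let ι : X ⥤ Grp be a functor into the category of groups that preserves small limits. Let a and b be objects of X and F : ι.obj a ⟶ ι.obj b a group homomorphism. Then there is a monotone assignment sending each object a' of X with a morphism p : a' ⟶ a to an object t(a') of X with a morphism q : t(a') ⟶ b, together with a group homomorphism τ_{a'} : ι.obj a' ⟶ ι.obj t(a') satisfying τ_{a'} ≫ ι.map q = ι.map p ≫ F, such that: (i) (universality) for every object b'' with a morphism r : b'' ⟶ b and every homomorphism τ' : ι.obj a' ⟶ ι.obj b'' with τ' ≫ ι.map r = ι.map p ≫ F, there exists a morphism t(a') ⟶ b'' in X whose ι-image composed after τ_{a'} equals τ'; and (ii) (monotonicity) whenever a'' ⟶ a' ⟶ a in X, there is a morphism t(a'') ⟶ t(a') in X over b. -/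
open CategoryTheory CategoryTheory.Limits

universe u

section Aux

variable {X : Type u} [SmallCategory X] [Quiver.IsThin X] [HasLimits X]
  (ι : X ⥤ GrpCat.{u}) [PreservesLimits ι] (a b : X) (F : ι.obj a ⟶ ι.obj b)

def GrpIdx (a' : X) (p : a' ⟶ a) : Type u :=
  Σ b'' : X, {rτ : (b'' ⟶ b) × (ι.obj a' ⟶ ι.obj b'') // rτ.2 ≫ ι.map rτ.1 = ι.map p ≫ F}

noncomputable def GrpTObj (a' : X) (p : a' ⟶ a) : X :=
  limit (Discrete.functor fun i : GrpIdx ι a b F a' p => i.1)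

def GrpI0 (a' : X) (p : a' ⟶ a) : GrpIdx ι a b F a' p :=
  ⟨b, ⟨(𝟙 b, ι.map p ≫ F), by simp⟩⟩

noncomputable def GrpQ (a' : X) (p : a' ⟶ a) : GrpTObj ι a b F a' p ⟶ b :=
  limit.π (Discrete.functor fun i : GrpIdx ι a b F a' p => i.1) ⟨GrpI0 ι a b F a' p⟩

def GrpCone (a' : X) (p : a' ⟶ a) :
    Cone ((Discrete.functor fun i : GrpIdx ι a b F a' p => i.1) ⋙ ι) where
  pt := ι.obj a'
  π := Discrete.natTrans fun i => i.as.2.1.2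

noncomputable def GrpTau (a' : X) (p : a' ⟶ a) : ι.obj a' ⟶ ι.obj (GrpTObj ι a b F a' p) :=
  (isLimitOfPreserves ι (limit.isLimit _)).lift (GrpCone ι a b F a' p)

lemma GrpTau_fac (a' : X) (p : a' ⟶ a) (i : GrpIdx ι a b F a' p) :
    GrpTau ι a b F a' p ≫
      ι.map (limit.π (Discrete.functor fun i : GrpIdx ι a b F a' p => i.1) ⟨i⟩) =
      i.2.1.2 :=
  (isLimitOfPreserves ι (limit.isLimit _)).fac (GrpCone ι a b F a' p) ⟨i⟩

end Aux

theorem preorder_to_Grp_induced_monotone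
    {X : Type u} [SmallCategory X] [Quiver.IsThin X] [HasLimits X]
    (ι : X ⥤ GrpCat.{u}) [PreservesLimits ι]
    (a b : X) (F : ι.obj a ⟶ ι.obj b) :
    ∃ (t : ∀ a' : X, (a' ⟶ a) → X)
      (q : ∀ (a' : X) (p : a' ⟶ a), t a' p ⟶ b)
      (τ : ∀ (a' : X) (p : a' ⟶ a), ι.obj a' ⟶ ι.obj (t a' p)),
      (∀ (a' : X) (p : a' ⟶ a), τ a' p ≫ ι.map (q a' p) = ι.map p ≫ F) ∧
      -- (i) universality
      (∀ (a' : X) (p : a' ⟶ a) (b'' : X) (r : b'' ⟶ b)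
          (τ' : ι.obj a' ⟶ ι.obj b''),
        τ' ≫ ι.map r = ι.map p ≫ F →
          ∃ ψ : t a' p ⟶ b'', τ a' p ≫ ι.map ψ = τ') ∧
      -- (ii) monotonicity
      (∀ (a'' a' : X) (u : a'' ⟶ a') (p : a' ⟶ a),
        ∃ w : t a'' (u ≫ p) ⟶ t a' p, w ≫ q a' p = q a'' (u ≫ p)) := by
  refine ⟨GrpTObj ι a b F, GrpQ ι a b F, GrpTau ι a b F, ?_, ?_, ?_⟩
  · intro a' p
    exact GrpTau_fac ι a b F a' p (GrpI0 ι a b F a' p)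
  · intro a' p b'' r τ' h
    exact ⟨limit.π (Discrete.functor fun i : GrpIdx ι a b F a' p => i.1) ⟨⟨b'', ⟨(r, τ'), h⟩⟩⟩,
      GrpTau_fac ι a b F a' p ⟨b'', ⟨(r, τ'), h⟩⟩⟩
  · intro a'' a' u p
    refine ⟨limit.lift (Discrete.functor fun i : GrpIdx ι a b F a' p => i.1)
      ⟨GrpTObj ι a b F a'' (u ≫ p), Discrete.natTrans fun i =>
        limit.π (Discrete.functor fun j : GrpIdx ι a b F a'' (u ≫ p) => j.1)
          ⟨⟨i.as.1, ⟨(i.as.2.1.1, ι.map u ≫ i.as.2.1.2), by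
            rw [Category.assoc, i.as.2.2, ← Category.assoc, ← ι.map_comp]⟩⟩⟩⟩, ?_⟩
    exact Subsingleton.elim _ _
end
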